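/- Let β, x₁,…,x_d, b₁, b₂,… be independent indeterminates and work in the ring of formal power series over ℤ in these variables. Let a = (a₁,…,a_d) ∈ ℤ^d with a_i + d - i ≥ 0 for every i. Define the d×d matrices H' := ( Σ_{s≥0} C(i-j, s) β^s G^{(a_i+d-i)}_{a_i+j-i+s} )_{1≤i,j≤d} and M̄ := ( (-1)^{d-i} ē_{d-i}^{(j)} )_{1≤i,j≤d}, where ē_p^{(j)} is the p-th elementary symmetric polynomial in the d-1 quantities x_i/(1+βx_i) for 1 ≤ i ≤ d, i ≠ j, and C(n,s) is the generalized binomial coefficient given by (1+x)^n = Σ_{s≥0} C(n,s)x^s. Then the (i,j)-entry of the product H'M̄ equals [x_j|b]^{a_i+d-i} · (1+βx_j)^{i-d}. -/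

import Mathlib

open scoped BigOperators

namespace GrothDet

/-- Index type for the indeterminates: `β`, `x₁,…,x_d`, `b₁,b₂,…`. -/
abbrev Idx (d : ℕ) := Unit ⊕ Fin d ⊕ ℕ

/-- The ambient ring: formal power series over `ℤ` in `β`, the `xᵢ` and the `bⱼ`. -/
abbrev R (d : ℕ) := MvPowerSeries (Idx d) ℤ

noncomputable def β (d : ℕ) : R d := MvPowerSeries.X (Sum.inl ())
noncomputable def x (d : ℕ) (i : Fin d) : R d := MvPowerSeries.X (Sum.inr (Sum.inl i))
noncomputable def b (d : ℕ) (ℓ : ℕ) : R d := MvPowerSeries.X (Sum.inr (Sum.inr ℓ))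

/-- `x ⊕ y := x + y + βxy`. -/
noncomputable def oplus (d : ℕ) (u v : R d) : R d := u + v + β d * u * v

/-- `[y|b]^k := (y ⊕ b₁)⋯(y ⊕ b_k)`. -/
noncomputable def fb (d : ℕ) (y : R d) (k : ℕ) : R d :=
  ∏ ℓ ∈ Finset.range k, oplus d y (b d ℓ)

/-- The multiplicative inverse of `1 + β * x j` (a unit since its constant term is `1`). -/
noncomputable def invOneAdd (d : ℕ) (j : Fin d) : R d :=
  MvPowerSeries.invOfUnit (1 + β d * x d j) 1

/-- `F^{(k)}(u) = ∏ᵢ (1+βxᵢ)/(1-xᵢu) · ∏_{ℓ=1}^k (1+(u+β)b_ℓ)` as a power series in `u`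
over `R d`; here `(1-xᵢu)⁻¹ = ∑_n xᵢⁿ uⁿ`. -/
noncomputable def F (d : ℕ) (k : ℕ) : PowerSeries (R d) :=
  (∏ i : Fin d,
      PowerSeries.C (R := R d) (1 + β d * x d i) * PowerSeries.mk fun n => x d i ^ n) *
    ∏ ℓ ∈ Finset.range k,
      (1 + (PowerSeries.X + PowerSeries.C (R := R d) (β d)) * PowerSeries.C (R := R d) (b d ℓ))

/-- `[u^t] F^{(k)}(u)`, extended by `0` in negative degrees `t`. -/
noncomputable def Fcoeff (d : ℕ) (k : ℕ) (t : ℤ) : R d :=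
  if 0 ≤ t then PowerSeries.coeff (R := R d) t.toNat (F d k) else 0

/-- The sum `∑_{s≥0} f s` of a family of power series such that `β^s ∣ f s`:
it is defined coefficientwise; on the coefficient of a monomial `n` only the
(finitely many) terms with `s ≤ n(β)` contribute, and the value is the limit of the
partial sums in the formal power series topology. -/
noncomputable def seriesSum (d : ℕ) (f : ℕ → R d) : R d :=
  (fun n => ∑ s ∈ Finset.range (n (Sum.inl ()) + 1), MvPowerSeries.coeff (R := ℤ) n (f s) :
    (Idx d →₀ ℕ) → ℤ)

/-- `G^{(k)}_m = ∑_{s≥0} (-β)^s [u^{m+s}] F^{(k)}(u)`. -/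
noncomputable def G (d : ℕ) (k : ℕ) (m : ℤ) : R d :=
  seriesSum d fun s => (-β d) ^ s * Fcoeff d k (m + s)

/-- The `p`-th elementary symmetric function of the family `f` restricted to `S`. -/
noncomputable def esym (d : ℕ) (S : Finset (Fin d)) (p : ℕ) (f : Fin d → R d) : R d :=
  ∑ t ∈ S.powersetCard p, ∏ i ∈ t, f i

/-- `x_i/(1+βx_i) = -x̄_i`. -/
noncomputable def xbar (d : ℕ) (i : Fin d) : R d := x d i * invOneAdd d i



variable {d : ℕ}

lemma coeff_beta_pow_mul (N : ℕ) (g : R d) (n : Idx d →₀ ℕ) (hn : n (Sum.inl ()) < N) :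
    MvPowerSeries.coeff (R := ℤ) n (β d ^ N * g) = 0 := by
  rw [β, MvPowerSeries.X_pow_eq, MvPowerSeries.coeff_monomial_mul, if_neg]
  intro h
  exact absurd (Finsupp.single_le_iff.mp h) (by omega)

lemma beta_pow_dvd_of_coeff (N : ℕ) (h : R d)
    (hh : ∀ n : Idx d →₀ ℕ, n (Sum.inl ()) < N → MvPowerSeries.coeff (R := ℤ) n h = 0) :
    β d ^ N ∣ h := by
  classical
  obtain ⟨c, hc⟩ : ∃ c : R d, ∀ n, MvPowerSeries.coeff (R := ℤ) n c
      = MvPowerSeries.coeff (R := ℤ) (n + Finsupp.single (Sum.inl ()) N) h :=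
    ⟨fun n => MvPowerSeries.coeff (R := ℤ) (n + Finsupp.single (Sum.inl ()) N) h, fun n => rfl⟩
  refine ⟨c, ?_⟩
  apply MvPowerSeries.ext
  intro n
  rw [β, MvPowerSeries.X_pow_eq, MvPowerSeries.coeff_monomial_mul]
  split_ifs with hle
  · rw [one_mul]
    rw [hc]
    rw [tsub_add_cancel_of_le hle]
  · exact hh n (by by_contra hc; exact hle (Finsupp.single_le_iff.mpr (by omega)))

lemma coeff_seriesSum (f : ℕ → R d) (n : Idx d →₀ ℕ) :
    MvPowerSeries.coeff (R := ℤ) n (seriesSum d f)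
      = ∑ s ∈ Finset.range (n (Sum.inl ()) + 1), MvPowerSeries.coeff (R := ℤ) n (f s) := rfl

lemma seriesSum_sub_partial (f : ℕ → R d) (hf : ∀ s, β d ^ s ∣ f s) (N : ℕ) :
    β d ^ N ∣ seriesSum d f - ∑ s ∈ Finset.range N, f s := by
  apply beta_pow_dvd_of_coeff
  intro n hn
  rw [map_sub, coeff_seriesSum, map_sum, ← neg_sub,
    ← Finset.sum_sdiff_eq_sub (Finset.range_subset_range.mpr hn), neg_eq_zero]
  apply Finset.sum_eq_zero
  intro s hs
  obtain ⟨g, hg⟩ := hf s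
  rw [hg]
  exact coeff_beta_pow_mul s g n (by simp only [Finset.mem_sdiff, Finset.mem_range] at hs; omega)


lemma choose_neg_one (t : ℕ) : Ring.choose (-1 : ℤ) t = (-1) ^ t := by
  have : Ring.choose (-1 : ℤ) t = Ring.multichoose ((-1 : ℤ) - t + 1) t := rfl
  rw [this]
  have h : ((-1 : ℤ) - t + 1) = -(t : ℤ) := by ring
  rw [h, Ring.multichoose_neg_self]

lemma vandermonde_int (r s : ℤ) (m : ℕ) :
    ∑ p ∈ Finset.HasAntidiagonal.antidiagonal m, Ring.choose r p.1 * Ring.choose s p.2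
      = Ring.choose (r + s) m :=
  (Ring.add_choose_eq m (Commute.all r s)).symm

lemma choose_int_natCast (n t : ℕ) : Ring.choose ((n : ℤ)) t = (n.choose t : ℤ) :=
  Ring.choose_natCast n t

lemma choose_int_zero (m : ℕ) : Ring.choose (0 : ℤ) m = if m = 0 then 1 else 0 :=
  Ring.choose_zero_ite ℤ m

lemma double_reduce (N A B : ℕ) (hA : N ≤ A) (hB : N ≤ B) (f : ℕ → ℕ → R d)
    (hf : ∀ s t : ℕ, N ≤ s + t → β d ^ N ∣ f s t) :
    β d ^ N ∣ (∑ s ∈ Finset.range A, ∑ t ∈ Finset.range B, f s t)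
      - ∑ m ∈ Finset.range N, ∑ p ∈ Finset.HasAntidiagonal.antidiagonal m, f p.1 p.2 := by
  classical
  rw [← Finset.sum_product']
  have hbi : ∑ m ∈ Finset.range N, ∑ p ∈ Finset.HasAntidiagonal.antidiagonal m, f p.1 p.2
      = ∑ p ∈ (Finset.range N).biUnion Finset.HasAntidiagonal.antidiagonal, f p.1 p.2 := by
    rw [Finset.sum_biUnion]
    intro m₁ _ m₂ _ hne
    apply Finset.disjoint_left.mpr
    intro p hp1 hp2
    rw [Finset.HasAntidiagonal.mem_antidiagonal] at hp1 hp2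
    exact hne (hp1 ▸ hp2)
  have hset : (Finset.range N).biUnion Finset.HasAntidiagonal.antidiagonal
      = (Finset.range A ×ˢ Finset.range B).filter (fun p => p.1 + p.2 < N) := by
    ext p
    simp only [Finset.mem_biUnion, Finset.mem_range, Finset.HasAntidiagonal.mem_antidiagonal,
      Finset.mem_filter, Finset.mem_product]
    constructor
    · rintro ⟨m, hm, rfl⟩; omega
    · rintro ⟨⟨h1, h2⟩, h3⟩; exact ⟨p.1 + p.2, h3, rfl⟩
  rw [hbi, hset]
  rw [← Finset.sum_filter_add_sum_filter_not (Finset.range A ×ˢ Finset.range B)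
    (fun p => p.1 + p.2 < N) (fun p => f p.1 p.2)]
  rw [add_sub_cancel_left]
  apply Finset.dvd_sum
  intro p hp
  simp only [Finset.mem_filter, not_lt] at hp
  exact hf p.1 p.2 hp.2


lemma eq_of_forall_dvd (A B : R d) (h : ∀ N : ℕ, β d ^ N ∣ A - B) : A = B := by
  rw [← sub_eq_zero]
  apply MvPowerSeries.ext
  intro n
  obtain ⟨g, hg⟩ := h (n (Sum.inl ()) + 1)
  rw [hg, map_zero]
  exact coeff_beta_pow_mul _ g n (by omega)

lemma beta_dvd_smul_mul (z : ℤ) (s : ℕ) (g : R d) : β d ^ s ∣ z • (β d ^ s * g) :=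
  ⟨z • g, by rw [zsmul_eq_mul, zsmul_eq_mul]; ring⟩

lemma G_partial (k : ℕ) (m : ℤ) (N : ℕ) :
    β d ^ N ∣ G d k m - ∑ t ∈ Finset.range N, (-β d) ^ t * Fcoeff d k (m + t) := by
  exact seriesSum_sub_partial _ (fun t => ⟨(-1) ^ t * Fcoeff d k (m + t), by ring⟩) N

lemma H_partial (k : ℕ) (c m : ℤ) (N : ℕ) :
    β d ^ N ∣ (seriesSum d fun s => Ring.choose c s • (β d ^ s * G d k (m + s)))
      - ∑ r ∈ Finset.range N, Ring.choose (c - 1) r • (β d ^ r * Fcoeff d k (m + r)) := by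
  have h1 : β d ^ N ∣ (seriesSum d fun s => Ring.choose c s • (β d ^ s * G d k (m + s)))
      - ∑ s ∈ Finset.range N, Ring.choose c s • (β d ^ s * G d k (m + s)) :=
    seriesSum_sub_partial _ (fun s => beta_dvd_smul_mul _ s _) N
  have h2 : β d ^ N ∣ (∑ s ∈ Finset.range N, Ring.choose c s • (β d ^ s * G d k (m + s)))
      - ∑ s ∈ Finset.range N, Ring.choose c s •
          (β d ^ s * ∑ t ∈ Finset.range N, (-β d) ^ t * Fcoeff d k (m + s + t)) := by
    rw [← Finset.sum_sub_distrib]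
    apply Finset.dvd_sum
    intro s _
    have := G_partial (d := d) k (m + s) N
    obtain ⟨g, hg⟩ := this
    refine ⟨Ring.choose c s • (β d ^ s * g), ?_⟩
    rw [← smul_sub, ← mul_sub, hg, zsmul_eq_mul, zsmul_eq_mul]
    ring
  -- now reduce the double sum
  have h3 : β d ^ N ∣ (∑ s ∈ Finset.range N, Ring.choose c s •
          (β d ^ s * ∑ t ∈ Finset.range N, (-β d) ^ t * Fcoeff d k (m + s + t)))
      - ∑ r ∈ Finset.range N, Ring.choose (c - 1) r • (β d ^ r * Fcoeff d k (m + r)) := by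
    have hd := double_reduce (d := d) N N N le_rfl le_rfl
      (fun s t => (Ring.choose c s * (-1) ^ t : ℤ) • (β d ^ (s + t) * Fcoeff d k (m + s + t)))
      (fun s t hst => dvd_trans (pow_dvd_pow _ hst) (beta_dvd_smul_mul _ _ _))
    have e1 : (∑ s ∈ Finset.range N, Ring.choose c s •
          (β d ^ s * ∑ t ∈ Finset.range N, (-β d) ^ t * Fcoeff d k (m + s + t)))
        = ∑ s ∈ Finset.range N, ∑ t ∈ Finset.range N,
            (Ring.choose c s * (-1) ^ t : ℤ) • (β d ^ (s + t) * Fcoeff d k (m + s + t)) := by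
      apply Finset.sum_congr rfl
      intro s _
      rw [Finset.mul_sum, Finset.smul_sum]
      apply Finset.sum_congr rfl
      intro t _
      rw [zsmul_eq_mul, zsmul_eq_mul]
      push_cast
      ring
    have e2 : (∑ m' ∈ Finset.range N, ∑ p ∈ Finset.HasAntidiagonal.antidiagonal m',
            (Ring.choose c p.1 * (-1) ^ p.2 : ℤ) • (β d ^ (p.1 + p.2) * Fcoeff d k (m + p.1 + p.2)))
        = ∑ r ∈ Finset.range N, Ring.choose (c - 1) r • (β d ^ r * Fcoeff d k (m + r)) := by
      apply Finset.sum_congr rfl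
      intro r _
      have : ∀ p ∈ Finset.HasAntidiagonal.antidiagonal r,
          (Ring.choose c p.1 * (-1) ^ p.2 : ℤ) • (β d ^ (p.1 + p.2) * Fcoeff d k (m + p.1 + p.2))
          = (Ring.choose c p.1 * Ring.choose (-1 : ℤ) p.2) • (β d ^ r * Fcoeff d k (m + r)) := by
        intro p hp
        rw [Finset.HasAntidiagonal.mem_antidiagonal] at hp
        obtain ⟨p1, p2⟩ := p
        subst hp
        rw [choose_neg_one]
        congr 2
        push_cast
        ring
      rw [Finset.sum_congr rfl this, ← Finset.sum_smul, vandermonde_int,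
        show c + -1 = c - 1 from by ring]
    rw [e1, ← e2]
    exact hd
  have := dvd_add (dvd_add h1 h2) h3
  convert this using 1
  ring

noncomputable def geo (d : ℕ) (j : Fin d) : PowerSeries (R d) :=
  PowerSeries.mk fun n => x d j ^ n

noncomputable def Pk (d k : ℕ) : PowerSeries (R d) :=
  ∏ ℓ ∈ Finset.range k,
    (1 + (PowerSeries.X + PowerSeries.C (R := R d) (β d)) * PowerSeries.C (R := R d) (b d ℓ))

lemma F_eq (k : ℕ) :
    F d k = (∏ r : Fin d, PowerSeries.C (R := R d) (1 + β d * x d r) * geo d r) * Pk d k := rfl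

lemma coeff_trans (N : ℕ) (φ ψ : PowerSeries (R d))
    (h : PowerSeries.C (R := R d) (β d ^ N) ∣ φ - ψ) (m : ℕ) :
    β d ^ N ∣ PowerSeries.coeff (R := R d) m φ - PowerSeries.coeff (R := R d) m ψ := by
  obtain ⟨g, hg⟩ := h
  refine ⟨PowerSeries.coeff (R := R d) m g, ?_⟩
  rw [← map_sub, hg, PowerSeries.coeff_C_mul]

lemma Fcoeff_as_coeff (k : ℕ) (t : ℤ) (E M : ℕ) (h : (M : ℤ) - E = t) :
    Fcoeff d k t = PowerSeries.coeff (R := R d) M (PowerSeries.X ^ E * F d k) := by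
  rw [PowerSeries.coeff_X_pow_mul', Fcoeff]
  by_cases hE : E ≤ M
  · rw [if_pos hE, if_pos (show (0:ℤ) ≤ t by omega)]
    have ht : t.toNat = M - E := by omega
    rw [ht]
  · rw [if_neg hE, if_neg (show ¬ (0:ℤ) ≤ t by omega)]

lemma one_sub_mul_geo (j : Fin d) :
    (1 - PowerSeries.C (R := R d) (x d j) * PowerSeries.X) * geo d j = 1 := by
  ext n
  rw [sub_mul, one_mul, map_sub, mul_assoc, PowerSeries.coeff_C_mul]
  cases n with
  | zero => simp [geo, PowerSeries.coeff_zero_X_mul, PowerSeries.coeff_mk]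
  | succ n =>
      rw [PowerSeries.coeff_succ_X_mul, PowerSeries.coeff_one]
      simp [geo, PowerSeries.coeff_mk, pow_succ, mul_comm]

lemma Pk_succ (k : ℕ) :
    Pk d (k + 1) = Pk d k + PowerSeries.C (R := R d) (b d k) * (PowerSeries.X * Pk d k)
      + PowerSeries.C (R := R d) (β d * b d k) * Pk d k := by
  rw [Pk, Finset.prod_range_succ, ← Pk, map_mul]
  ring

lemma coeff_Pk_eq_zero (k : ℕ) : ∀ t : ℕ, k < t → PowerSeries.coeff (R := R d) t (Pk d k) = 0 := by
  induction k with
  | zero =>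
      intro t ht
      rw [Pk, Finset.range_zero, Finset.prod_empty, PowerSeries.coeff_one, if_neg (by omega)]
  | succ k ih =>
      intro t ht
      obtain ⟨t, rfl⟩ : ∃ t', t = t' + 1 := ⟨t - 1, by omega⟩
      rw [Pk_succ, map_add, map_add, PowerSeries.coeff_C_mul, PowerSeries.coeff_C_mul,
        PowerSeries.coeff_succ_X_mul, ih (t + 1) (by omega), ih t (by omega)]
      ring

lemma coeff_geoPk_succ (k m : ℕ) (hm : k ≤ m) (j : Fin d) :
    PowerSeries.coeff (R := R d) (m + 1) (geo d j * Pk d k)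
      = x d j * PowerSeries.coeff (R := R d) m (geo d j * Pk d k) := by
  have h1 : (1 - PowerSeries.C (R := R d) (x d j) * PowerSeries.X) * (geo d j * Pk d k)
      = Pk d k := by
    rw [← mul_assoc, one_sub_mul_geo, one_mul]
  have h2 := congrArg (PowerSeries.coeff (R := R d) (m + 1)) h1
  rw [sub_mul, one_mul, map_sub, mul_assoc, PowerSeries.coeff_C_mul,
    PowerSeries.coeff_succ_X_mul, coeff_Pk_eq_zero k (m + 1) (by omega), sub_eq_zero] at h2
  exact h2

lemma coeff_geoPk_shift (k r : ℕ) (j : Fin d) :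
    PowerSeries.coeff (R := R d) (k + r) (geo d j * Pk d k)
      = x d j ^ r * PowerSeries.coeff (R := R d) k (geo d j * Pk d k) := by
  induction r with
  | zero => simp
  | succ r ih =>
      rw [← add_assoc, coeff_geoPk_succ k (k + r) (by omega) j, ih, pow_succ]
      ring

lemma V_eq_fb (k : ℕ) (j : Fin d) :
    PowerSeries.coeff (R := R d) k (geo d j * Pk d k) = fb d (x d j) k := by
  induction k with
  | zero =>
      rw [Pk, Finset.range_zero, Finset.prod_empty, mul_one, fb, Finset.range_zero,
        Finset.prod_empty]
      simp [geo, PowerSeries.coeff_mk]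
  | succ k ih =>
      have hshift := coeff_geoPk_succ (d := d) k k le_rfl j
      have h3 : geo d j * Pk d (k + 1) = geo d j * Pk d k
          + PowerSeries.C (R := R d) (b d k) * (PowerSeries.X * (geo d j * Pk d k))
          + PowerSeries.C (R := R d) (β d * b d k) * (geo d j * Pk d k) := by
        rw [Pk_succ]; ring
      have hfb : fb d (x d j) (k + 1) = fb d (x d j) k * oplus d (x d j) (b d k) :=
        Finset.prod_range_succ _ k
      rw [h3, map_add, map_add, PowerSeries.coeff_C_mul, PowerSeries.coeff_C_mul,
        PowerSeries.coeff_succ_X_mul, hshift, ih, hfb, oplus]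
      ring

lemma one_add_mul_invOneAdd (j : Fin d) : (1 + β d * x d j) * invOneAdd d j = 1 := by
  apply MvPowerSeries.mul_invOfUnit
  simp [β, x]

noncomputable def Bpoly (d : ℕ) (e : ℤ) (N : ℕ) : PowerSeries (R d) :=
  ∑ r ∈ Finset.range N,
    PowerSeries.C (R := R d) (((Ring.choose e r : ℤ) : R d) * β d ^ r) * PowerSeries.X ^ (N - 1 - r)

lemma Bpoly_one (e : ℤ) : Bpoly d e 1 = 1 := by
  rw [Bpoly]
  simp only [Finset.sum_range_one, Ring.choose_zero_right, pow_zero, Int.cast_one, one_mul,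
    map_one, mul_one, Nat.sub_zero, Nat.sub_self]

lemma Bpoly_succ (e : ℤ) (N : ℕ) :
    Bpoly d e (N + 1) = PowerSeries.X * Bpoly d e N
      + PowerSeries.C (R := R d) (((Ring.choose e N : ℤ) : R d) * β d ^ N) := by
  have hsum : ∀ r ∈ Finset.range N,
      PowerSeries.C (R := R d) (((Ring.choose e r : ℤ) : R d) * β d ^ r)
          * PowerSeries.X ^ (N + 1 - 1 - r)
        = PowerSeries.X * (PowerSeries.C (R := R d) (((Ring.choose e r : ℤ) : R d) * β d ^ r)
            * PowerSeries.X ^ (N - 1 - r)) := by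
    intro r hr
    rw [Finset.mem_range] at hr
    rw [show N + 1 - 1 - r = (N - 1 - r) + 1 by omega, pow_succ]
    ring
  rw [Bpoly, Finset.sum_range_succ, Finset.sum_congr rfl hsum, ← Finset.mul_sum, ← Bpoly,
    show N + 1 - 1 - N = 0 by omega, pow_zero, mul_one]

lemma Bstep (e : ℤ) (N : ℕ) :
    (PowerSeries.X + PowerSeries.C (R := R d) (β d)) * Bpoly d e (N + 1)
      = PowerSeries.X * Bpoly d (e + 1) (N + 1)
        + PowerSeries.C (R := R d) (((Ring.choose e N : ℤ) : R d) * β d ^ (N + 1)) := by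
  induction N with
  | zero =>
      rw [Bpoly_one, Bpoly_one, mul_one, mul_one]
      rw [Ring.choose_zero_right]
      push_cast
      simp
  | succ N ih =>
      rw [Bpoly_succ e (N + 1), Bpoly_succ (e + 1) (N + 1)]
      have hp : ((Ring.choose (e + 1) (N + 1) : ℤ) : R d)
          = ((Ring.choose e N : ℤ) : R d) + ((Ring.choose e (N + 1) : ℤ) : R d) := by
        rw [Ring.choose_succ_succ]
        push_cast
        ring
      have hC1 : PowerSeries.C (R := R d) (((Ring.choose (e + 1) (N + 1) : ℤ) : R d) * β d ^ (N + 1))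
          = PowerSeries.C (R := R d) (((Ring.choose e N : ℤ) : R d) * β d ^ (N + 1))
            + PowerSeries.C (R := R d) (((Ring.choose e (N + 1) : ℤ) : R d) * β d ^ (N + 1)) := by
        rw [← map_add, hp]
        ring_nf
      have hC2 : PowerSeries.C (R := R d) (β d) *
            PowerSeries.C (R := R d) (((Ring.choose e (N + 1) : ℤ) : R d) * β d ^ (N + 1))
          = PowerSeries.C (R := R d) (((Ring.choose e (N + 1) : ℤ) : R d) * β d ^ (N + 2)) := by
        rw [← map_mul]
        ring_nf
      linear_combination PowerSeries.X * ih + hC2 - PowerSeries.X * hC1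

lemma pascal_shift (N : ℕ) (e : ℤ) (p : ℕ) :
    PowerSeries.C (R := R d) (β d ^ (N + 1)) ∣
      PowerSeries.X ^ p * Bpoly d (e + p) (N + 1)
        - (PowerSeries.X + PowerSeries.C (R := R d) (β d)) ^ p * Bpoly d e (N + 1) := by
  induction p with
  | zero => simp
  | succ p ih =>
      have h1 := Bstep (d := d) (e + p) N
      have key : PowerSeries.X ^ (p + 1) * Bpoly d (e + (p + 1 : ℕ)) (N + 1)
          - (PowerSeries.X + PowerSeries.C (R := R d) (β d)) ^ (p + 1) * Bpoly d e (N + 1)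
          = (PowerSeries.X + PowerSeries.C (R := R d) (β d)) *
              (PowerSeries.X ^ p * Bpoly d (e + p) (N + 1)
                - (PowerSeries.X + PowerSeries.C (R := R d) (β d)) ^ p * Bpoly d e (N + 1))
            - PowerSeries.X ^ p *
              PowerSeries.C (R := R d) (((Ring.choose (e + p) N : ℤ) : R d) * β d ^ (N + 1)) := by
        have hcast : e + ((p + 1 : ℕ) : ℤ) = (e + p) + 1 := by push_cast; ring
        rw [hcast]
        linear_combination -(PowerSeries.X ^ p * h1)
      rw [key]
      apply dvd_sub
      · exact Dvd.dvd.mul_left ih _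
      · refine ⟨PowerSeries.X ^ p * PowerSeries.C (R := R d) ((Ring.choose (e + p) N : ℤ) : R d), ?_⟩
        rw [show ((((Ring.choose (e + p) N : ℤ) : R d)) * β d ^ (N + 1))
            = β d ^ (N+1) * ((Ring.choose (e + p) N : ℤ) : R d) from by ring, map_mul]
        ring

lemma esym_prod (S : Finset (Fin d)) (f : Fin d → R d) (Y : PowerSeries (R d)) :
    ∏ r ∈ S, (1 + PowerSeries.C (R := R d) (f r) * Y)
      = ∑ p ∈ Finset.range (S.card + 1), PowerSeries.C (R := R d) (esym d S p f) * Y ^ p := by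
  classical
  have h1 : ∏ r ∈ S, (PowerSeries.C (R := R d) (f r) * Y + 1)
      = ∑ t ∈ S.powerset, (∏ r ∈ t, PowerSeries.C (R := R d) (f r) * Y) * ∏ r ∈ S \ t, (1 : PowerSeries (R d)) :=
    Finset.prod_add _ _ S
  simp only [Finset.prod_const_one, mul_one] at h1
  have h2 : ∀ t ∈ S.powerset, (∏ r ∈ t, PowerSeries.C (R := R d) (f r) * Y)
      = PowerSeries.C (R := R d) (∏ r ∈ t, f r) * Y ^ t.card := by
    intro t _
    rw [Finset.prod_mul_distrib, Finset.prod_const, map_prod]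
  calc ∏ r ∈ S, (1 + PowerSeries.C (R := R d) (f r) * Y)
      = ∏ r ∈ S, (PowerSeries.C (R := R d) (f r) * Y + 1) := by
        apply Finset.prod_congr rfl; intros; ring
    _ = ∑ t ∈ S.powerset, PowerSeries.C (R := R d) (∏ r ∈ t, f r) * Y ^ t.card := by
        rw [h1]; exact Finset.sum_congr rfl h2
    _ = ∑ p ∈ Finset.range (S.card + 1), ∑ t ∈ Finset.powersetCard p S,
          PowerSeries.C (R := R d) (∏ r ∈ t, f r) * Y ^ t.card := by
        rw [Finset.powerset_card_biUnion, Finset.sum_biUnion]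
        intro p _ q _ hpq
        apply Finset.disjoint_left.mpr
        intro t ht1 ht2
        rw [Finset.mem_powersetCard] at ht1 ht2
        exact hpq (ht1.2 ▸ ht2.2)
    _ = ∑ p ∈ Finset.range (S.card + 1), PowerSeries.C (R := R d) (esym d S p f) * Y ^ p := by
        apply Finset.sum_congr rfl
        intro p _
        rw [esym, map_sum, Finset.sum_mul]
        apply Finset.sum_congr rfl
        intro t ht
        rw [(Finset.mem_powersetCard.mp ht).2]

lemma factor_eq (r : Fin d) :
    1 + PowerSeries.C (R := R d) (xbar d r) * (-(PowerSeries.X + PowerSeries.C (R := R d) (β d)))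
      = PowerSeries.C (R := R d) (invOneAdd d r) * (1 - PowerSeries.C (R := R d) (x d r) * PowerSeries.X) := by
  have hinv := one_add_mul_invOneAdd (d := d) r
  have h1' : (1 : R d) - invOneAdd d r * x d r * β d = invOneAdd d r := by
    linear_combination -hinv
  have h2 : xbar d r = invOneAdd d r * x d r := by rw [xbar]; ring
  have h4 := congrArg (PowerSeries.C (R := R d)) h1'
  simp only [map_sub, map_mul, map_one] at h4
  rw [h2, map_mul]
  linear_combination h4

lemma cancellation (j : Fin d) (k : ℕ) :
    (∏ r ∈ Finset.univ \ {j},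
        (PowerSeries.C (R := R d) (invOneAdd d r) * (1 - PowerSeries.C (R := R d) (x d r) * PowerSeries.X)))
        * F d k
      = PowerSeries.C (R := R d) (1 + β d * x d j) * geo d j * Pk d k := by
  classical
  have per : ∀ r : Fin d,
      (PowerSeries.C (R := R d) (invOneAdd d r) * (1 - PowerSeries.C (R := R d) (x d r) * PowerSeries.X))
        * (PowerSeries.C (R := R d) (1 + β d * x d r) * geo d r) = 1 := by
    intro r
    have h5 := one_sub_mul_geo (d := d) r
    have h6 := one_add_mul_invOneAdd (d := d) r
    calc (PowerSeries.C (R := R d) (invOneAdd d r) * (1 - PowerSeries.C (R := R d) (x d r) * PowerSeries.X))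
          * (PowerSeries.C (R := R d) (1 + β d * x d r) * geo d r)
        = PowerSeries.C (R := R d) ((1 + β d * x d r) * invOneAdd d r)
            * ((1 - PowerSeries.C (R := R d) (x d r) * PowerSeries.X) * geo d r) := by
          rw [map_mul]; ring
      _ = 1 := by rw [h5, h6, map_one, mul_one]
  have hsplit := Finset.prod_eq_mul_prod_sdiff_singleton_of_mem (Finset.mem_univ j)
    (fun r => PowerSeries.C (R := R d) (1 + β d * x d r) * geo d r)
  rw [F_eq, hsplit]
  have : (∏ r ∈ Finset.univ \ {j},
      (PowerSeries.C (R := R d) (invOneAdd d r) * (1 - PowerSeries.C (R := R d) (x d r) * PowerSeries.X)))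
      * ∏ r ∈ Finset.univ \ {j}, (PowerSeries.C (R := R d) (1 + β d * x d r) * geo d r) = 1 := by
    rw [← Finset.prod_mul_distrib]
    rw [Finset.prod_congr rfl (fun r _ => per r), Finset.prod_const_one]
  linear_combination (PowerSeries.C (R := R d) (1 + β d * x d j) * geo d j * Pk d k) * this

lemma claim1 (j : Fin d) (q N : ℕ) :
    β d ^ (N + 1) ∣ (1 + β d * x d j) *
        (∑ r ∈ Finset.range (N + 1), ((Ring.choose (-(q : ℤ) - 1) r : ℤ) : R d) * (β d * x d j) ^ r)
      - invOneAdd d j ^ q := by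
  set y : R d := β d * x d j with hy
  set T : R d := ∑ r ∈ Finset.range (N + 1),
    ((Ring.choose (-(q : ℤ) - 1) r : ℤ) : R d) * y ^ r with hT
  have hpow : (1 + y) ^ (q + 1)
      = ∑ t ∈ Finset.range (N + q + 2), ((Nat.choose (q + 1) t : ℤ) : R d) * y ^ t := by
    rw [add_comm (1 : R d) y, add_pow]
    rw [← Finset.sum_subset (Finset.range_subset_range.mpr (by omega : q + 1 + 1 ≤ N + q + 2))
      (fun t _ ht => ?_)]
    · apply Finset.sum_congr rfl
      intro t _
      push_cast
      ring
    · rw [Finset.mem_range, not_lt] at ht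
      rw [Nat.choose_eq_zero_of_lt (by omega)]
      push_cast
      ring
  have hmain : β d ^ (N + 1) ∣ (1 + y) ^ (q + 1) * T - 1 := by
    rw [hpow, hT, Finset.sum_mul_sum]
    have hred := double_reduce (d := d) (N + 1) (N + q + 2) (N + 1) (by omega) le_rfl
      (fun s t => (((Nat.choose (q + 1) s : ℤ) : R d) * y ^ s)
        * (((Ring.choose (-(q : ℤ) - 1) t : ℤ) : R d) * y ^ t))
      (fun s t hst => by
        refine dvd_trans (pow_dvd_pow _ hst) ⟨((Nat.choose (q + 1) s : ℤ) : R d)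
          * ((Ring.choose (-(q : ℤ) - 1) t : ℤ) : R d) * x d j ^ (s + t), ?_⟩
        simp only [hy]
        ring)
    have heval : (∑ m ∈ Finset.range (N + 1), ∑ p ∈ Finset.HasAntidiagonal.antidiagonal m,
        (((Nat.choose (q + 1) p.1 : ℤ) : R d) * y ^ p.1)
          * (((Ring.choose (-(q : ℤ) - 1) p.2 : ℤ) : R d) * y ^ p.2)) = 1 := by
      have hterm : ∀ m ∈ Finset.range (N + 1), (∑ p ∈ Finset.HasAntidiagonal.antidiagonal m,
          (((Nat.choose (q + 1) p.1 : ℤ) : R d) * y ^ p.1)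
            * (((Ring.choose (-(q : ℤ) - 1) p.2 : ℤ) : R d) * y ^ p.2))
          = ((if m = 0 then 1 else 0 : ℤ) : R d) * y ^ m := by
        intro m _
        have : ∀ p ∈ Finset.HasAntidiagonal.antidiagonal m,
            (((Nat.choose (q + 1) p.1 : ℤ) : R d) * y ^ p.1)
              * (((Ring.choose (-(q : ℤ) - 1) p.2 : ℤ) : R d) * y ^ p.2)
            = ((Ring.choose ((q : ℤ) + 1) p.1 * Ring.choose (-(q : ℤ) - 1) p.2 : ℤ) : R d)
                * y ^ m := by
          intro p hp
          rw [Finset.HasAntidiagonal.mem_antidiagonal] at hp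
          rw [show ((q : ℤ) + 1) = ((q + 1 : ℕ) : ℤ) by push_cast; ring, choose_int_natCast]
          rw [← hp, pow_add]
          push_cast
          ring
        rw [Finset.sum_congr rfl this, ← Finset.sum_mul, ← Int.cast_sum, vandermonde_int,
          show ((q : ℤ) + 1) + (-(q : ℤ) - 1) = 0 by ring, choose_int_zero]
      rw [Finset.sum_congr rfl hterm,
        Finset.sum_eq_single 0 (fun m _ hm => by rw [if_neg hm]; push_cast; ring)
          (fun h => absurd (Finset.mem_range.mpr (by omega)) h)]
      rw [if_pos rfl]
      push_cast
      ring
    rw [← heval]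
    exact hred
  have h0 : invOneAdd d j * (1 + y) = 1 := by
    rw [hy]
    linear_combination one_add_mul_invOneAdd (d := d) j
  have hq : invOneAdd d j ^ q * (1 + y) ^ (q + 1) = 1 + y := by
    have hpq : invOneAdd d j ^ q * (1 + y) ^ q = 1 := by
      rw [← mul_pow, h0, one_pow]
    calc invOneAdd d j ^ q * (1 + y) ^ (q + 1)
        = (invOneAdd d j ^ q * (1 + y) ^ q) * (1 + y) := by ring
      _ = 1 + y := by rw [hpq, one_mul]
  obtain ⟨g, hg⟩ := hmain
  exact ⟨invOneAdd d j ^ q * g, by linear_combination invOneAdd d j ^ q * hg - T * hq⟩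

lemma Bpoly_mul_coeff (e : ℤ) (N k : ℕ) (φ : PowerSeries (R d)) :
    PowerSeries.coeff (R := R d) (k + N) (Bpoly d e (N + 1) * φ)
      = ∑ r ∈ Finset.range (N + 1),
          ((Ring.choose e r : ℤ) : R d) * β d ^ r * PowerSeries.coeff (R := R d) (k + r) φ := by
  rw [Bpoly, Finset.sum_mul, map_sum]
  refine Finset.sum_congr rfl fun r hr => ?_
  rw [Finset.mem_range] at hr
  rw [mul_assoc, PowerSeries.coeff_C_mul, PowerSeries.coeff_X_pow_mul',
    if_pos (by omega : N + 1 - 1 - r ≤ k + N),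
    show k + N - (N + 1 - 1 - r) = k + r by omega]

lemma stepB_term (k N : ℕ) (c : R d) (e : ℤ) (p : ℕ) :
    PowerSeries.coeff (R := R d) (k + N)
        ((PowerSeries.C (R := R d) c * (PowerSeries.X ^ p * Bpoly d e (N + 1))) * F d k)
      = c * ∑ r ∈ Finset.range (N + 1),
          ((Ring.choose e r : ℤ) : R d) * β d ^ r * Fcoeff d k ((k : ℤ) + r - p) := by
  rw [show (PowerSeries.C (R := R d) c * (PowerSeries.X ^ p * Bpoly d e (N + 1))) * F d k
      = PowerSeries.C (R := R d) c * (Bpoly d e (N + 1) * (PowerSeries.X ^ p * F d k)) from by ring]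
  rw [PowerSeries.coeff_C_mul, Bpoly_mul_coeff]
  refine congrArg (c * ·) (Finset.sum_congr rfl fun r hr => ?_)
  rw [← Fcoeff_as_coeff k ((k : ℤ) + r - p) p (k + r) (by push_cast; ring)]

/-- The `(i,j)`-entry of `H'·M̄` equals `[x_j|b]^{a_i+d-i} (1+βx_j)^{i-d}`. -/
theorem grothendieck_HMbar_entry
    (d : ℕ) (a : Fin d → ℤ) (ha : ∀ i : Fin d, 0 ≤ a i + d - ((i : ℕ) + 1)) (i j : Fin d) :
    (Matrix.of (fun i j : Fin d =>
        seriesSum d fun s =>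
          Ring.choose (((i : ℕ) : ℤ) - ((j : ℕ) : ℤ)) s •
            (β d ^ s * G d (a i + d - ((i : ℕ) + 1)).toNat (a i + (j : ℕ) - (i : ℕ) + s))) *
      Matrix.of (fun i j : Fin d =>
        (-1 : R d) ^ (d - 1 - (i : ℕ)) *
          esym d (Finset.univ \ {j}) (d - 1 - (i : ℕ)) (xbar d))) i j
      = fb d (x d j) (a i + d - ((i : ℕ) + 1)).toNat *
          invOneAdd d j ^ (d - 1 - (i : ℕ)) := by
  classical
  have hd : 0 < d := i.pos
  have hi : (i : ℕ) < d := i.isLt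
  rw [Matrix.mul_apply]
  simp only [Matrix.of_apply]
  set k : ℕ := (a i + d - ((i : ℕ) + 1)).toNat with hkdef
  have hk : (k : ℤ) = a i + d - ((i : ℕ) + 1) := Int.toNat_of_nonneg (ha i)
  set q : ℕ := d - 1 - (i : ℕ) with hqdef
  set S : Finset (Fin d) := Finset.univ \ {j} with hSdef
  have hcard : S.card = d - 1 := by
    rw [hSdef, Finset.card_sdiff_of_subset (Finset.subset_univ {j}), Finset.card_singleton,
      Finset.card_univ, Fintype.card_fin]
  apply eq_of_forall_dvd
  intro N0
  rcases N0 with _ | N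
  · rw [pow_zero]
    exact one_dvd _
  -- Step A : partial sums of the series
  have dvd1 : β d ^ (N + 1) ∣
      (∑ l : Fin d, (seriesSum d fun s =>
          Ring.choose (((i : ℕ) : ℤ) - ((l : ℕ) : ℤ)) s •
            (β d ^ s * G d k (a i + (l : ℕ) - (i : ℕ) + s))) *
        ((-1 : R d) ^ (d - 1 - (l : ℕ)) * esym d S (d - 1 - (l : ℕ)) (xbar d)))
      - ∑ l : Fin d, (∑ r ∈ Finset.range (N + 1),
          Ring.choose (((i : ℕ) : ℤ) - ((l : ℕ) : ℤ) - 1) r •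
            (β d ^ r * Fcoeff d k (a i + (l : ℕ) - (i : ℕ) + r))) *
        ((-1 : R d) ^ (d - 1 - (l : ℕ)) * esym d S (d - 1 - (l : ℕ)) (xbar d)) := by
    rw [← Finset.sum_sub_distrib]
    apply Finset.dvd_sum
    intro l _
    rw [← sub_mul]
    exact (H_partial k _ _ (N + 1)).mul_right _
  -- the power-series object
  set SigN : PowerSeries (R d) := ∑ p ∈ Finset.range d,
      PowerSeries.C (R := R d) ((-1 : R d) ^ p * esym d S p (xbar d)) *
        (PowerSeries.X ^ p * Bpoly d ((p : ℤ) - q - 1) (N + 1)) with hSigN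
  -- Step B : the partial sum is a coefficient of `SigN * F`
  have hA12 : (∑ l : Fin d, (∑ r ∈ Finset.range (N + 1),
          Ring.choose (((i : ℕ) : ℤ) - ((l : ℕ) : ℤ) - 1) r •
            (β d ^ r * Fcoeff d k (a i + (l : ℕ) - (i : ℕ) + r))) *
        ((-1 : R d) ^ (d - 1 - (l : ℕ)) * esym d S (d - 1 - (l : ℕ)) (xbar d)))
      = PowerSeries.coeff (R := R d) (k + N) (SigN * F d k) := by
    rw [hSigN, Finset.sum_mul, map_sum]
    rw [Fin.sum_univ_eq_sum_range (fun l : ℕ => (∑ r ∈ Finset.range (N + 1),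
          Ring.choose (((i : ℕ) : ℤ) - (l : ℤ) - 1) r •
            (β d ^ r * Fcoeff d k (a i + (l : ℕ) - (i : ℕ) + r))) *
        ((-1 : R d) ^ (d - 1 - l) * esym d S (d - 1 - l) (xbar d))) d]
    rw [← Finset.sum_range_reflect]
    refine Finset.sum_congr rfl fun p hp => ?_
    rw [Finset.mem_range] at hp
    rw [stepB_term]
    have hl1 : d - 1 - (d - 1 - p) = p := by omega
    rw [hl1]
    have hr : ∀ r ∈ Finset.range (N + 1),
        Ring.choose (((i : ℕ) : ℤ) - ((d - 1 - p : ℕ) : ℤ) - 1) r •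
          (β d ^ r * Fcoeff d k (a i + ((d - 1 - p : ℕ) : ℤ) - ((i : ℕ) : ℤ) + r))
        = ((Ring.choose ((p : ℤ) - (q : ℤ) - 1) r : ℤ) : R d) * β d ^ r
            * Fcoeff d k ((k : ℤ) + r - p) := by
      intro r _
      rw [show ((i : ℕ) : ℤ) - ((d - 1 - p : ℕ) : ℤ) - 1 = (p : ℤ) - (q : ℤ) - 1 by omega,
        show a i + ((d - 1 - p : ℕ) : ℤ) - ((i : ℕ) : ℤ) + r = (k : ℤ) + r - p by omega,
        zsmul_eq_mul]
      push_cast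
      ring
    rw [Finset.sum_congr rfl hr]
    ring
  -- Step C : power-series congruence
  have dvd2 : PowerSeries.C (R := R d) (β d ^ (N + 1)) ∣ SigN * F d k
      - Bpoly d (-(q : ℤ) - 1) (N + 1) *
          (PowerSeries.C (R := R d) (1 + β d * x d j) * geo d j * Pk d k) := by
    have hstep : ∀ p ∈ Finset.range d, PowerSeries.C (R := R d) (β d ^ (N + 1)) ∣
        (PowerSeries.C (R := R d) ((-1 : R d) ^ p * esym d S p (xbar d)) *
            (PowerSeries.X ^ p * Bpoly d ((p : ℤ) - q - 1) (N + 1))) * F d k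
        - (PowerSeries.C (R := R d) ((-1 : R d) ^ p * esym d S p (xbar d)) *
            (PowerSeries.X + PowerSeries.C (R := R d) (β d)) ^ p) *
          (Bpoly d (-(q : ℤ) - 1) (N + 1) * F d k) := by
      intro p _
      have h := (pascal_shift (d := d) N (-(q : ℤ) - 1) p).mul_right
        (PowerSeries.C (R := R d) ((-1 : R d) ^ p * esym d S p (xbar d)) * F d k)
      have heq : (PowerSeries.X ^ p * Bpoly d ((-(q : ℤ) - 1) + p) (N + 1)
            - (PowerSeries.X + PowerSeries.C (R := R d) (β d)) ^ p *
              Bpoly d (-(q : ℤ) - 1) (N + 1)) *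
          (PowerSeries.C (R := R d) ((-1 : R d) ^ p * esym d S p (xbar d)) * F d k)
          = (PowerSeries.C (R := R d) ((-1 : R d) ^ p * esym d S p (xbar d)) *
              (PowerSeries.X ^ p * Bpoly d ((p : ℤ) - q - 1) (N + 1))) * F d k
            - (PowerSeries.C (R := R d) ((-1 : R d) ^ p * esym d S p (xbar d)) *
                (PowerSeries.X + PowerSeries.C (R := R d) (β d)) ^ p) *
              (Bpoly d (-(q : ℤ) - 1) (N + 1) * F d k) := by
        rw [show (-(q : ℤ) - 1) + p = (p : ℤ) - q - 1 by ring]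
        ring
      rw [← heq]
      exact h
    have hrange : Finset.range d = Finset.range (S.card + 1) := by
      rw [hcard]
      congr 1
      omega
    have hprod : (∑ p ∈ Finset.range d,
        PowerSeries.C (R := R d) ((-1 : R d) ^ p * esym d S p (xbar d)) *
          (PowerSeries.X + PowerSeries.C (R := R d) (β d)) ^ p)
        = ∏ r ∈ S, (PowerSeries.C (R := R d) (invOneAdd d r) *
            (1 - PowerSeries.C (R := R d) (x d r) * PowerSeries.X)) := by
      calc (∑ p ∈ Finset.range d,
          PowerSeries.C (R := R d) ((-1 : R d) ^ p * esym d S p (xbar d)) *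
            (PowerSeries.X + PowerSeries.C (R := R d) (β d)) ^ p)
          = ∑ p ∈ Finset.range (S.card + 1),
              PowerSeries.C (R := R d) (esym d S p (xbar d)) *
                (-(PowerSeries.X + PowerSeries.C (R := R d) (β d))) ^ p := by
            rw [hrange]
            refine Finset.sum_congr rfl fun p _ => ?_
            rw [map_mul, map_pow, map_neg, map_one,
              neg_pow (PowerSeries.X + PowerSeries.C (R := R d) (β d)) p]
            ring
        _ = ∏ r ∈ S, (1 + PowerSeries.C (R := R d) (xbar d r) *
              (-(PowerSeries.X + PowerSeries.C (R := R d) (β d)))) :=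
            (esym_prod S (xbar d) _).symm
        _ = ∏ r ∈ S, (PowerSeries.C (R := R d) (invOneAdd d r) *
              (1 - PowerSeries.C (R := R d) (x d r) * PowerSeries.X)) :=
            Finset.prod_congr rfl fun r _ => factor_eq r
    have hsum2 : (∑ p ∈ Finset.range d,
        (PowerSeries.C (R := R d) ((-1 : R d) ^ p * esym d S p (xbar d)) *
            (PowerSeries.X + PowerSeries.C (R := R d) (β d)) ^ p) *
          (Bpoly d (-(q : ℤ) - 1) (N + 1) * F d k))
        = Bpoly d (-(q : ℤ) - 1) (N + 1) *
            (PowerSeries.C (R := R d) (1 + β d * x d j) * geo d j * Pk d k) := by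
      rw [← Finset.sum_mul, hprod,
        show (∏ r ∈ S, (PowerSeries.C (R := R d) (invOneAdd d r) *
            (1 - PowerSeries.C (R := R d) (x d r) * PowerSeries.X))) *
          (Bpoly d (-(q : ℤ) - 1) (N + 1) * F d k)
          = Bpoly d (-(q : ℤ) - 1) (N + 1) *
            ((∏ r ∈ S, (PowerSeries.C (R := R d) (invOneAdd d r) *
              (1 - PowerSeries.C (R := R d) (x d r) * PowerSeries.X))) * F d k) from by ring,
        hSdef, cancellation]
    have heq2 : SigN * F d k - Bpoly d (-(q : ℤ) - 1) (N + 1) *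
          (PowerSeries.C (R := R d) (1 + β d * x d j) * geo d j * Pk d k)
        = ∑ p ∈ Finset.range d,
            ((PowerSeries.C (R := R d) ((-1 : R d) ^ p * esym d S p (xbar d)) *
                (PowerSeries.X ^ p * Bpoly d ((p : ℤ) - q - 1) (N + 1))) * F d k
              - (PowerSeries.C (R := R d) ((-1 : R d) ^ p * esym d S p (xbar d)) *
                  (PowerSeries.X + PowerSeries.C (R := R d) (β d)) ^ p) *
                (Bpoly d (-(q : ℤ) - 1) (N + 1) * F d k)) := by
      rw [Finset.sum_sub_distrib, hsum2, ← Finset.sum_mul, ← hSigN]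
    rw [heq2]
    exact Finset.dvd_sum hstep
  have dvd3 := coeff_trans (N + 1) _ _ dvd2 (k + N)
  -- Step D : evaluation of the second coefficient
  have hA3eval : PowerSeries.coeff (R := R d) (k + N)
        (Bpoly d (-(q : ℤ) - 1) (N + 1) *
          (PowerSeries.C (R := R d) (1 + β d * x d j) * geo d j * Pk d k))
      = (1 + β d * x d j) * fb d (x d j) k *
          ∑ r ∈ Finset.range (N + 1),
            ((Ring.choose (-(q : ℤ) - 1) r : ℤ) : R d) * (β d * x d j) ^ r := by
    rw [Bpoly_mul_coeff, Finset.mul_sum]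
    refine Finset.sum_congr rfl fun r _ => ?_
    rw [mul_assoc (PowerSeries.C (R := R d) (1 + β d * x d j)), PowerSeries.coeff_C_mul,
      coeff_geoPk_shift, V_eq_fb, mul_pow]
    ring
  -- Step E : claim1 finishes
  have dvd4 : β d ^ (N + 1) ∣ PowerSeries.coeff (R := R d) (k + N)
        (Bpoly d (-(q : ℤ) - 1) (N + 1) *
          (PowerSeries.C (R := R d) (1 + β d * x d j) * geo d j * Pk d k))
      - fb d (x d j) k * invOneAdd d j ^ q := by
    obtain ⟨g, hg⟩ := claim1 (d := d) j q N
    refine ⟨fb d (x d j) k * g, ?_⟩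
    rw [hA3eval]
    linear_combination (fb d (x d j) k) * hg
  have total := dvd_add dvd1 (dvd_add dvd3 dvd4)
  convert total using 1
  rw [hA12]
  ring

end GrothDet
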